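/- Let k < n be positive integers, K a field, ℓ ∈ {1, ..., n-k+1}, and w = {w_1 < ... < w_k} ∈ I_{k,n}. The restricted ideal G_{k,n,ℓ}|_w = ker(φ_ℓ)|_{{I : I ≤ w}} is monomial-free if and only if at least one of the following holds: w_1 ∈ {1, ℓ, n-k+1}, or w_2 ∈ {1, ..., ℓ} ∪ {w_1 + 1}. -/

import Mathlib

open MvPolynomial

/-- `IsIdx n k J` : `J` is a strictly increasing `k`-tuple with entries in `{1, …, n}`,
representing an element `{J 0 < J 1 < … < J (k-1)}` of `I_{k,n}`. -/
def IsIdx (n k : ℕ) (J : Fin k → ℕ) : Prop :=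
  StrictMono J ∧ ∀ s, 1 ≤ J s ∧ J s ≤ n

/-- Componentwise (Bruhat) order on sorted tuples. -/
def TupLe {k : ℕ} (I J : Fin k → ℕ) : Prop := ∀ s, I s ≤ J s

/-- Index type of the Plücker variables `P_I`, `I ∈ I_{k,n}`. -/
def PlVar (n k : ℕ) : Type := {J : Fin k → ℕ // IsIdx n k J}

/-- The number of entries of `J` lying in `{1, …, ℓ}`. -/
def nSmall {k : ℕ} (ℓ : ℕ) (J : Fin k → ℕ) : ℕ :=
  (Finset.univ.filter fun s => J s ≤ ℓ).card

/-- Row assignment of the block diagonal matching field `B_ℓ` : the entry of `J` in sorted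
position `i` (0-indexed) is placed in this (1-indexed) row. -/
def mfRow {k : ℕ} (ℓ : ℕ) (J : Fin k → ℕ) (i : Fin k) : ℕ :=
  if 2 ≤ k ∧ nSmall ℓ J = 1 then
    (if (i : ℕ) = 0 then 2 else if (i : ℕ) = 1 then 1 else (i : ℕ) + 1)
  else (i : ℕ) + 1

/-- The monomial map `φ_ℓ` of the block diagonal matching field `B_ℓ`. -/
noncomputable def phiMF (K : Type*) [Field K] (n k ℓ : ℕ) :
    MvPolynomial (PlVar n k) K →ₐ[K] MvPolynomial (ℕ × ℕ) K :=
  aeval fun J => ∏ i : Fin k, X (mfRow ℓ J.val i, J.val i)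

/-- The Plücker map, sending `P_J` to the `k × k` minor on columns `J`
of the generic matrix `(x_{i,j})`. -/
noncomputable def pluMap (K : Type*) [Field K] (n k : ℕ) :
    MvPolynomial (PlVar n k) K →ₐ[K] MvPolynomial (ℕ × ℕ) K :=
  aeval fun J =>
    (Matrix.of fun r c : Fin k => (X ((r : ℕ) + 1, J.val c) : MvPolynomial (ℕ × ℕ) K)).det

/-- Restriction `G|_T = (G + ⟨P_I : I ∉ T⟩) ∩ K[P_I : I ∈ T]` of an ideal to the
variables indexed by `T`. -/
noncomputable def restrictIdeal {K : Type*} [Field K] {n k : ℕ}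
    (G : Ideal (MvPolynomial (PlVar n k) K)) (T : Set (PlVar n k)) :
    Ideal (MvPolynomial T K) :=
  Ideal.comap (rename fun x : T => (x : PlVar n k))
    (G ⊔ Ideal.span (X '' {J | J ∉ T}))

/-- An ideal of a polynomial ring is monomial-free if it contains no monomial. -/
def MonomialFree {K : Type*} [Field K] {σ : Type*} (I : Ideal (MvPolynomial σ K)) : Prop :=
  ∀ m : σ →₀ ℕ, (monomial m (1 : K)) ∉ I

/-- `T_w^v = {I ∈ I_{k,n} : v ≤ I ≤ w}`. -/
def TWV {n k : ℕ} (v w : PlVar n k) : Set (PlVar n k) :=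
  {J | TupLe v.val J.val ∧ TupLe J.val w.val}

/-- `{I ∈ I_{k,n} : I ≤ w}`. -/
def TleW {n k : ℕ} (w : PlVar n k) : Set (PlVar n k) := {J | TupLe J.val w.val}

/-- `{I ∈ I_{k,n} : v ≤ I}`. -/
def TgeV {n k : ℕ} (v : PlVar n k) : Set (PlVar n k) := {J | TupLe v.val J.val}

/-- The weight matrix `M_ℓ` (rows and columns 1-indexed). -/
def Mmat (n ℓ : ℕ) (i j : ℕ) : ℤ :=
  if i = 2 then (if j ≤ ℓ then (ℓ : ℤ) - j + 1 else (n : ℤ) - j + ℓ + 1)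
  else ((i : ℤ) - 1) * ((n : ℤ) - j + 1)

/-- The weight `w_ℓ(P_J)` induced by `M_ℓ` on the Plücker variable `P_J`. -/
def wVec (n ℓ : ℕ) {k : ℕ} (J : Fin k → ℕ) : ℤ :=
  ∑ i : Fin k, Mmat n ℓ (mfRow ℓ J i) (J i)

/-- Weight of an exponent vector with respect to a weight vector `u`. -/
def expWt {σ : Type*} (u : σ → ℤ) (m : σ →₀ ℕ) : ℤ := m.sum fun i e => u i * (e : ℤ)

/-- Initial form of a polynomial: the sum of its terms of minimal `u`-weight. -/
noncomputable def initialForm {K σ : Type*} [Field K] (u : σ → ℤ) (f : MvPolynomial σ K) :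
    MvPolynomial σ K :=
  ∑ m ∈ f.support.filter (fun m => ∀ m' ∈ f.support, expWt u m ≤ expWt u m'),
    monomial m (coeff m f)

/-- Initial ideal with respect to the weight vector `u`. -/
noncomputable def initialIdeal {K σ : Type*} [Field K] (u : σ → ℤ)
    (I : Ideal (MvPolynomial σ K)) : Ideal (MvPolynomial σ K) :=
  Ideal.span {g | ∃ f ∈ I, g = initialForm u f}

/-- `w_0 I = {n + 1 - i : i ∈ I}`, as a sorted tuple. -/
def w0t (n : ℕ) {k : ℕ} (I : Fin k → ℕ) : Fin k → ℕ :=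
  fun s => n + 1 - I ⟨k - 1 - (s : ℕ), by have := s.isLt; omega⟩

/-- Membership in `Z_{k,n}` : either `J = {1, …, k-1, i}` with `k ≤ i ≤ n`,
or `J = {1, …, k+1} \\ {i}` with `1 ≤ i ≤ k-1`. -/
def ZPred (n k : ℕ) (J : Fin k → ℕ) : Prop :=
  (∃ i, k ≤ i ∧ i ≤ n ∧
    ∀ s : Fin k, J s = if (s : ℕ) + 1 < k then (s : ℕ) + 1 else i) ∨
  (∃ i, 1 ≤ i ∧ i ≤ k - 1 ∧
    ∀ s : Fin k, J s = if (s : ℕ) + 1 < i then (s : ℕ) + 1 else (s : ℕ) + 2)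

/-- A two-column semi-standard Young tableau with columns `I`, `J`. -/
def SSYT (n k : ℕ) (I J : Fin k → ℕ) : Prop :=
  IsIdx n k I ∧ IsIdx n k J ∧ ∀ s, I s ≤ J s

/-- The map `Γ_ℓ` on two-column semi-standard Young tableaux (columns as sorted tuples). -/
def Gamma (ℓ : ℕ) {k : ℕ} (I J : Fin k → ℕ) : (Fin k → ℕ) × (Fin k → ℕ) :=
  if h : 2 ≤ k then
    let i0 := I ⟨0, by omega⟩
    let i1 := I ⟨1, by omega⟩
    let j0 := J ⟨0, by omega⟩
    let j1 := J ⟨1, by omega⟩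
    if (i0 ≤ ℓ ∧ i1 ≤ ℓ ∧ j0 ≤ ℓ ∧ ℓ < j1 ∧ i0 < j0 ∧ j0 < i1) ∨
       (i0 ≤ ℓ ∧ ℓ < i1 ∧ ℓ < j0 ∧ ℓ < j1 ∧ j0 < i1 ∧ i1 < j1) then
      ((fun s => if (s : ℕ) = 0 then j0 else I s), (fun s => if (s : ℕ) = 0 then i0 else J s))
    else (I, J)
  else (I, J)

/-- A column (a `k`-subset given as a sorted tuple) displayed in `B_ℓ`-order:
when `k ≥ 2` and exactly one entry is `≤ ℓ`, the two smallest entries are swapped. -/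
def rowArrange (ℓ : ℕ) {k : ℕ} (C : Fin k → ℕ) : Fin k → ℕ :=
  if h : 2 ≤ k then
    (if nSmall ℓ C = 1 then
      fun s => if (s : ℕ) = 0 then C ⟨1, by omega⟩
        else if (s : ℕ) = 1 then C ⟨0, by omega⟩ else C s
    else C)
  else C

/-- Two two-column tableaux (with columns `A,B` resp. `C,D`) are row-wise equal. -/
def rowEq {k : ℕ} (A B C D : Fin k → ℕ) : Prop :=
  ∀ s, ({A s, B s} : Multiset ℕ) = {C s, D s}

/-- The kernel of the restricted monomial map `φ_ℓ|_T`. -/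
noncomputable def kerPhiRes (K : Type*) [Field K] (n k ℓ : ℕ) (T : Set (PlVar n k)) :
    Ideal (MvPolynomial T K) :=
  RingHom.ker ((phiMF K n k ℓ).comp (rename fun x : T => (x : PlVar n k)))

/-- The ideal `I(X_w^v)` of the Richardson variety: the restriction of the
Plücker ideal `G_{k,n}` to the variables in `T_w^v`. -/
noncomputable def richIdeal (K : Type*) [Field K] (n k : ℕ) (v w : PlVar n k) :
    Ideal (MvPolynomial (TWV v w) K) :=
  restrictIdeal (RingHom.ker (pluMap K n k)) (TWV v w)

section Aux

open Finsupp

/-- Exponent vector of `φ_ℓ(P_J)`. -/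
noncomputable def colExp (ℓ : ℕ) {k : ℕ} (J : Fin k → ℕ) : (ℕ × ℕ) →₀ ℕ :=
  ∑ i : Fin k, Finsupp.single (mfRow ℓ J i, J i) 1

/-- Exponent vector of `φ_ℓ(X^μ)`. -/
noncomputable def cont (n k ℓ : ℕ) (μ : PlVar n k →₀ ℕ) : (ℕ × ℕ) →₀ ℕ :=
  μ.sum fun J e => e • colExp ℓ J.val

lemma cont_add {n k ℓ : ℕ} (μ ν : PlVar n k →₀ ℕ) :
    cont n k ℓ (μ + ν) = cont n k ℓ μ + cont n k ℓ ν := by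
  classical
  exact Finsupp.sum_add_index (by simp) (by intro a _ b c; rw [add_smul])

lemma cont_single {n k ℓ : ℕ} (J : PlVar n k) (e : ℕ) :
    cont n k ℓ (Finsupp.single J e) = e • colExp ℓ J.val := by
  classical
  exact Finsupp.sum_single_index (by simp)

lemma prod_monomial {K : Type*} [Field K] {ι : Type*} (s : Finset ι) (d : ι → (ℕ × ℕ) →₀ ℕ) :
    (∏ i ∈ s, (monomial (d i) (1 : K))) = monomial (∑ i ∈ s, d i) 1 := by
  classical
  induction s using Finset.induction with
  | empty => simp [monomial_zero']
  | insert _ _ h ih => rw [Finset.prod_insert h, Finset.sum_insert h, ih, monomial_mul, one_mul]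

lemma phi_X {K : Type*} [Field K] (n k ℓ : ℕ) (J : PlVar n k) :
    phiMF K n k ℓ (X J) = monomial (colExp ℓ J.val) 1 := by
  rw [phiMF, aeval_X, colExp]
  rw [show (fun i => (X (mfRow ℓ J.val i, J.val i) : MvPolynomial (ℕ × ℕ) K)) =
    fun i => monomial (Finsupp.single (mfRow ℓ J.val i, J.val i) 1) 1 from rfl]
  exact prod_monomial _ _

lemma phi_monomial {K : Type*} [Field K] (n k ℓ : ℕ) (μ : PlVar n k →₀ ℕ) (a : K) :
    phiMF K n k ℓ (monomial μ a) = monomial (cont n k ℓ μ) a := by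
  classical
  induction μ using Finsupp.induction with
  | zero => simp [cont, monomial_zero', algHom_C]
  | single_add J e ν hJ he ih =>
      have h1 : (monomial (Finsupp.single J e + ν) a : MvPolynomial (PlVar n k) K)
          = monomial (Finsupp.single J e) 1 * monomial ν a := by
        rw [monomial_mul, one_mul]
      have h2 : (monomial (Finsupp.single J e) (1:K)) = (X J) ^ e := by
        rw [X, monomial_pow, one_pow, Finsupp.smul_single, smul_eq_mul, mul_one]
      rw [h1, map_mul, ih, h2, map_pow, phi_X, monomial_pow, one_pow, cont_add, cont_single,
        monomial_mul, one_mul]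

end Aux
section Aux2

variable {k ℓ : ℕ}

lemma entry_le_of_le {J : Fin k → ℕ} (hmono : StrictMono J) {s t : Fin k}
    (h : (s : ℕ) ≤ (t : ℕ)) : J s ≤ J t := hmono.monotone (by rwa [Fin.le_def])

lemma nSmall_eq_zero {J : Fin k → ℕ} (hmono : StrictMono J) {i0 : Fin k} (hi0 : (i0 : ℕ) = 0)
    (h : ℓ < J i0) : nSmall ℓ J = 0 := by
  rw [nSmall, Finset.card_eq_zero, Finset.filter_eq_empty_iff]
  intro s _
  have := entry_le_of_le hmono (s := i0) (t := s) (by omega)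
  omega

lemma nSmall_eq_one {J : Fin k → ℕ} (hmono : StrictMono J) {i0 i1 : Fin k}
    (hi0 : (i0 : ℕ) = 0) (hi1 : (i1 : ℕ) = 1)
    (h0 : J i0 ≤ ℓ) (h1' : ℓ < J i1) : nSmall ℓ J = 1 := by
  rw [nSmall]
  have : (Finset.univ.filter fun s => J s ≤ ℓ) = {i0} := by
    ext s
    simp only [Finset.mem_filter, Finset.mem_univ, true_and, Finset.mem_singleton]
    constructor
    · intro hs
      by_contra hne
      have hne' : (s : ℕ) ≠ (i0 : ℕ) := fun hc => hne (Fin.ext hc)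
      have := entry_le_of_le hmono (s := i1) (t := s) (by omega)
      omega
    · rintro rfl; exact h0
  rw [this, Finset.card_singleton]

lemma two_le_nSmall {J : Fin k → ℕ} (hmono : StrictMono J) {i0 i1 : Fin k}
    (hi0 : (i0 : ℕ) = 0) (hi1 : (i1 : ℕ) = 1)
    (h1' : J i1 ≤ ℓ) : 2 ≤ nSmall ℓ J := by
  have h0 : J i0 ≤ ℓ := le_trans (entry_le_of_le hmono (by omega)) h1'
  have hsub : ({i0, i1} : Finset (Fin k)) ⊆ Finset.univ.filter fun s => J s ≤ ℓ := by
    intro s hs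
    simp only [Finset.mem_insert, Finset.mem_singleton] at hs
    rcases hs with rfl | rfl <;> simp [h0, h1']
  have hcard : ({i0, i1} : Finset (Fin k)).card = 2 := by
    rw [Finset.card_insert_of_notMem (by simp [Fin.ext_iff]; omega), Finset.card_singleton]
  calc 2 = _ := hcard.symm
    _ ≤ _ := Finset.card_le_card hsub

lemma nSmall_one_iff {J : Fin k → ℕ} (hmono : StrictMono J) {i0 i1 : Fin k}
    (hi0 : (i0 : ℕ) = 0) (hi1 : (i1 : ℕ) = 1) :
    nSmall ℓ J = 1 ↔ J i0 ≤ ℓ ∧ ℓ < J i1 := by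
  constructor
  · intro h
    by_contra hc
    push_neg at hc
    rcases le_or_gt (J i0) ℓ with h0 | h0
    · have := two_le_nSmall hmono hi0 hi1 (hc h0); omega
    · have := nSmall_eq_zero hmono hi0 h0; omega
  · rintro ⟨h0, h1'⟩; exact nSmall_eq_one hmono hi0 hi1 h0 h1'

lemma mfRow_zero (hk : 2 ≤ k) (J : Fin k → ℕ) {i0 : Fin k} (hi0 : (i0 : ℕ) = 0) :
    mfRow ℓ J i0 = if nSmall ℓ J = 1 then 2 else 1 := by
  rw [mfRow]
  by_cases h : nSmall ℓ J = 1 <;> simp [h, hk, hi0]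

lemma mfRow_one (hk : 2 ≤ k) (J : Fin k → ℕ) {i1 : Fin k} (hi1 : (i1 : ℕ) = 1) :
    mfRow ℓ J i1 = if nSmall ℓ J = 1 then 1 else 2 := by
  rw [mfRow]
  by_cases h : nSmall ℓ J = 1 <;> simp [h, hk, hi1]

lemma mfRow_ge2 (J : Fin k → ℕ) (i : Fin k) (h : 2 ≤ (i : ℕ)) :
    mfRow ℓ J i = (i : ℕ) + 1 := by
  have h0 : (i : ℕ) ≠ 0 := by omega
  have h1 : (i : ℕ) ≠ 1 := by omega
  rw [mfRow]
  by_cases hc : 2 ≤ k ∧ nSmall ℓ J = 1 <;> simp [hc, h0, h1]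

lemma colExp_apply (J : Fin k → ℕ) (p : ℕ × ℕ) :
    colExp ℓ J p = (Finset.univ.filter fun i => ((mfRow ℓ J i, J i) : ℕ × ℕ) = p).card := by
  classical
  rw [colExp, Finset.card_filter, Finsupp.finset_sum_apply]
  congr 1
  ext i
  rw [Finsupp.single_apply]

lemma colExp_pos_of (J : Fin k → ℕ) (i : Fin k) :
    colExp ℓ J (mfRow ℓ J i, J i) ≠ 0 := by
  classical
  rw [colExp_apply]
  exact Finset.card_ne_zero_of_mem (a := i) (by simp)

lemma exists_of_colExp_pos {J : Fin k → ℕ} {p : ℕ × ℕ} (h : colExp ℓ J p ≠ 0) :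
    ∃ i, mfRow ℓ J i = p.1 ∧ J i = p.2 := by
  classical
  rw [colExp_apply, ← Nat.pos_iff_ne_zero, Finset.card_pos] at h
  obtain ⟨i, hi⟩ := h
  simp only [Finset.mem_filter, Prod.ext_iff] at hi
  exact ⟨i, hi.2⟩

lemma cont_apply {n : ℕ} (μ : PlVar n k →₀ ℕ) (p : ℕ × ℕ) :
    cont n k ℓ μ p = ∑ C ∈ μ.support, μ C * colExp ℓ C.val p := by
  classical
  rw [cont, Finsupp.sum, Finsupp.finset_sum_apply]
  congr 1

lemma cont_pos {n : ℕ} {μ : PlVar n k →₀ ℕ} {J : PlVar n k} (hJ : J ∈ μ.support)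
    {p : ℕ × ℕ} (h : colExp ℓ J.val p ≠ 0) : cont n k ℓ μ p ≠ 0 := by
  classical
  rw [cont_apply]
  have hle := Finset.single_le_sum (f := fun C : PlVar n k => μ C * colExp ℓ C.val p)
    (fun _ _ => Nat.zero_le _) hJ
  have : μ J ≠ 0 := Finsupp.mem_support_iff.mp hJ
  intro hc
  rw [hc] at hle
  simp only [Nat.le_zero, Nat.mul_eq_zero] at hle
  tauto

lemma exists_of_cont_pos {n : ℕ} {μ : PlVar n k →₀ ℕ} {p : ℕ × ℕ}
    (h : cont n k ℓ μ p ≠ 0) :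
    ∃ C ∈ μ.support, ∃ i, mfRow ℓ C.val i = p.1 ∧ C.val i = p.2 := by
  classical
  rw [cont_apply] at h
  obtain ⟨C, hC, hne⟩ : ∃ C ∈ μ.support, μ C * colExp ℓ C.val p ≠ 0 := by
    by_contra hc
    push_neg at hc
    exact h (Finset.sum_eq_zero hc)
  exact ⟨C, hC, exists_of_colExp_pos (fun h0 => hne (by rw [h0, Nat.mul_zero]))⟩

lemma strictMono_add_le {J : Fin k → ℕ} (hmono : StrictMono J) :
    ∀ (d : ℕ) (s t : Fin k), (t : ℕ) = (s : ℕ) + d → J s + d ≤ J t := by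
  intro d
  induction d with
  | zero =>
      intro s t h
      have hst : s = t := Fin.ext (by omega)
      rw [hst]; omega
  | succ d ih =>
      intro s t h
      have h1 := ih s ⟨(s:ℕ) + d, by omega⟩ rfl
      have h2 : J (⟨(s:ℕ) + d, by omega⟩ : Fin k) < J t := hmono (by rw [Fin.lt_def]; simp; omega)
      omega

lemma idx_le_bound {n : ℕ} {J : Fin k → ℕ} (hJ : IsIdx n k J) (hk : 1 ≤ k) (s : Fin k) :
    J s ≤ n - k + 1 + s := by
  have hlast := (hJ.2 ⟨k - 1, by omega⟩).2
  have h1 := strictMono_add_le hJ.1 (k - 1 - (s : ℕ)) s ⟨k - 1, by omega⟩ (by simp; omega)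
  have := s.isLt
  have := (hJ.2 s).1
  omega

end Aux2
section Aux3

variable {k ℓ : ℕ}

lemma colExp_split (hk : 2 ≤ k) (J : Fin k → ℕ) {i0 i1 : Fin k}
    (hi0 : (i0 : ℕ) = 0) (hi1 : (i1 : ℕ) = 1) :
    colExp ℓ J = Finsupp.single (mfRow ℓ J i0, J i0) 1 + Finsupp.single (mfRow ℓ J i1, J i1) 1
      + ∑ i ∈ Finset.univ.filter (fun i : Fin k => 2 ≤ (i : ℕ)),
          Finsupp.single ((i : ℕ) + 1, J i) 1 := by
  classical
  rw [colExp, ← Finset.sum_filter_add_sum_filter_not Finset.univ (fun i : Fin k => 2 ≤ (i : ℕ))]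
  rw [add_comm]
  congr 1
  · have hset : Finset.univ.filter (fun i : Fin k => ¬ 2 ≤ (i : ℕ)) = {i0, i1} := by
      ext s
      simp only [Finset.mem_filter, Finset.mem_univ, true_and, Finset.mem_insert,
        Finset.mem_singleton, Fin.ext_iff]
      omega
    rw [hset, Finset.sum_pair (show i0 ≠ i1 from fun h => by rw [Fin.ext_iff] at h; omega)]
  · exact Finset.sum_congr rfl fun i hi => by
      rw [mfRow_ge2 J i (Finset.mem_filter.mp hi).2]

lemma colExp_ones {n : ℕ} (hk : 2 ≤ k) {J : Fin k → ℕ} (hJ : IsIdx n k J)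
    {i0 : Fin k} (hi0 : (i0 : ℕ) = 0) :
    colExp ℓ J (1, 1) + colExp ℓ J (2, 1) = if J i0 = 1 then 1 else 0 := by
  classical
  have honly : ∀ i : Fin k, i ≠ i0 → J i ≠ 1 := by
    intro i hi
    have hlt : J i0 < J i := hJ.1 (by rw [Fin.lt_def]; simp only [ne_eq, Fin.ext_iff] at hi; omega)
    have := (hJ.2 i0).1
    omega
  rw [colExp_apply, colExp_apply, Finset.card_filter, Finset.card_filter,
    ← Finset.sum_add_distrib]
  rw [Finset.sum_eq_single i0]
  · have hrow := mfRow_zero (ℓ := ℓ) hk J hi0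
    by_cases hs : nSmall ℓ J = 1 <;> by_cases h1 : J i0 = 1 <;>
      simp [hrow, hs, h1, Prod.ext_iff]
  · intro b _ hb
    have := honly b hb
    simp [Prod.ext_iff, this]
  · simp

noncomputable def massH : ((ℕ × ℕ) →₀ ℕ) →+ ℕ := Finsupp.liftAddHom (fun _ => AddMonoidHom.id ℕ)

lemma massH_single (p : ℕ × ℕ) (e : ℕ) : massH (Finsupp.single p e) = e := by
  rw [massH, Finsupp.liftAddHom_apply_single]; rfl

lemma massH_colExp (J : Fin k → ℕ) : massH (colExp ℓ J) = k := by
  rw [colExp, map_sum]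
  simp [massH_single]

lemma massH_cont {n : ℕ} (μ : PlVar n k →₀ ℕ) :
    massH (cont n k ℓ μ) = k * (μ.sum fun _ e => e) := by
  classical
  rw [cont, Finsupp.sum, map_sum, Finsupp.sum, Finset.mul_sum]
  refine Finset.sum_congr rfl fun C _ => ?_
  rw [AddMonoidHom.map_nsmul, massH_colExp, smul_eq_mul, Nat.mul_comm]

lemma cont_ones {n : ℕ} (hk : 2 ≤ k) (μ : PlVar n k →₀ ℕ) {i0 : Fin k}
    (hi0 : (i0 : ℕ) = 0) :
    cont n k ℓ μ (1, 1) + cont n k ℓ μ (2, 1)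
      = ∑ C ∈ μ.support, μ C * (if C.val i0 = 1 then 1 else 0) := by
  classical
  rw [cont_apply, cont_apply, ← Finset.sum_add_distrib]
  refine Finset.sum_congr rfl fun C _ => ?_
  rw [← Nat.mul_add, colExp_ones hk C.2 hi0]

end Aux3
section Bridge

variable {K : Type*} [Field K] {n k ℓ : ℕ}

/-- Exponents reachable using at least one variable outside `T`. -/
def outE (n k ℓ : ℕ) (T : Set (PlVar n k)) : Set ((ℕ × ℕ) →₀ ℕ) :=
  {c | ∃ μ : PlVar n k →₀ ℕ, (∃ J ∈ μ.support, J ∉ T) ∧ cont n k ℓ μ = c}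

def suppIn (E : Set ((ℕ × ℕ) →₀ ℕ)) (p : MvPolynomial (ℕ × ℕ) K) : Prop :=
  ∀ c ∈ p.support, c ∈ E

lemma suppIn_add {E : Set ((ℕ × ℕ) →₀ ℕ)} {p q : MvPolynomial (ℕ × ℕ) K}
    (hp : suppIn E p) (hq : suppIn E q) : suppIn E (p + q) := by
  classical
  intro c hc
  rcases Finset.mem_union.mp (MvPolynomial.support_add hc) with h | h
  exacts [hp c h, hq c h]

lemma suppIn_mul {D E F : Set ((ℕ × ℕ) →₀ ℕ)} {p q : MvPolynomial (ℕ × ℕ) K}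
    (hp : suppIn D p) (hq : suppIn E q) (hDE : ∀ d ∈ D, ∀ e ∈ E, d + e ∈ F) :
    suppIn F (p * q) := by
  classical
  intro c hc
  have := MvPolynomial.support_mul p q hc
  rw [Finset.mem_add] at this
  obtain ⟨d, hd, e, he, rfl⟩ := this
  exact hDE d (hp d hd) e (hq e he)

lemma suppIn_monomial {E : Set ((ℕ × ℕ) →₀ ℕ)} {c : (ℕ × ℕ) →₀ ℕ} (a : K) (hc : c ∈ E) :
    suppIn E (monomial c a) := by
  intro d hd
  have := MvPolynomial.support_monomial_subset hd
  rw [Finset.mem_singleton] at this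
  rwa [this]

lemma suppIn_zero {E : Set ((ℕ × ℕ) →₀ ℕ)} : suppIn E (0 : MvPolynomial (ℕ × ℕ) K) := by
  intro c hc
  simp at hc

lemma colExp_eq_cont_single (J : PlVar n k) :
    colExp ℓ J.val = cont n k ℓ (Finsupp.single J 1) := by
  rw [cont_single, one_smul]

lemma mem_outE_add_left {T : Set (PlVar n k)} {c d : (ℕ × ℕ) →₀ ℕ}
    (hc : c ∈ Set.range (cont n k ℓ)) (hd : d ∈ outE n k ℓ T) : c + d ∈ outE n k ℓ T := by
  obtain ⟨ν, rfl⟩ := hc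
  obtain ⟨μ, ⟨J, hJ, hJT⟩, rfl⟩ := hd
  refine ⟨ν + μ, ⟨J, ?_, hJT⟩, cont_add ν μ⟩
  rw [Finsupp.mem_support_iff] at hJ ⊢
  simp only [Finsupp.add_apply]
  omega

lemma phi_suppIn_range (r : MvPolynomial (PlVar n k) K) :
    suppIn (Set.range (cont n k ℓ)) (phiMF K n k ℓ r) := by
  induction r using MvPolynomial.induction_on with
  | C a =>
      rw [show phiMF K n k ℓ (C a) = C a from by simp [algHom_C]]
      rw [MvPolynomial.C_apply]
      exact suppIn_monomial a ⟨0, by rw [cont]; simp⟩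
  | add p q hp hq => rw [map_add]; exact suppIn_add hp hq
  | mul_X p J hp =>
      rw [map_mul, phi_X]
      refine suppIn_mul hp (suppIn_monomial 1 rfl) ?_
      rintro d ⟨ν, rfl⟩ e rfl
      exact ⟨ν + Finsupp.single J 1, by rw [cont_add, cont_single, one_smul]⟩

lemma span_suppIn {T : Set (PlVar n k)} {b : MvPolynomial (PlVar n k) K}
    (hb : b ∈ Ideal.span (X '' {J | J ∉ T})) :
    suppIn (outE n k ℓ T) (phiMF K n k ℓ b) := by
  refine Submodule.span_induction ?_ ?_ ?_ ?_ hb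
  · rintro x ⟨J, hJT, rfl⟩
    rw [phi_X]
    refine suppIn_monomial 1 ⟨Finsupp.single J 1, ⟨J, ?_, hJT⟩, (colExp_eq_cont_single J).symm⟩
    simp
  · rw [map_zero]; exact suppIn_zero
  · intro x y _ _ hx hy
    rw [map_add]; exact suppIn_add hx hy
  · intro a x _ hx
    rw [smul_eq_mul, map_mul]
    exact suppIn_mul (phi_suppIn_range a) hx (fun d hd e he => mem_outE_add_left hd he)

/-- Forward bridge: a monomial in the restricted ideal yields a content relation with
a column outside `T`. -/
lemma bridge_forward {T : Set (PlVar n k)} {m : T →₀ ℕ}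
    (h : (monomial m (1 : K)) ∈ restrictIdeal (RingHom.ker (phiMF K n k ℓ)) T) :
    cont n k ℓ (m.mapDomain (fun x : T => (x : PlVar n k))) ∈ outE n k ℓ T := by
  classical
  rw [restrictIdeal, Ideal.mem_comap, rename_monomial] at h
  rw [Submodule.mem_sup] at h
  obtain ⟨a, ha, b, hb, hab⟩ := h
  have hphi : phiMF K n k ℓ (monomial (m.mapDomain (fun x : T => (x : PlVar n k))) (1 : K))
      = phiMF K n k ℓ b := by
    rw [← hab, map_add, show phiMF K n k ℓ a = 0 from ha, zero_add]
  rw [phi_monomial] at hphi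
  have hsupp := span_suppIn (ℓ := ℓ) (K := K) hb
  rw [← hphi] at hsupp
  refine hsupp _ ?_
  rw [MvPolynomial.support_monomial]
  simp

/-- Backward bridge: a content relation with a column outside `T` gives a monomial
in the restricted ideal. -/
lemma bridge_backward {T : Set (PlVar n k)} (m : T →₀ ℕ) (μ : PlVar n k →₀ ℕ)
    (J : PlVar n k) (hJ : J ∈ μ.support) (hJT : J ∉ T)
    (hc : cont n k ℓ (m.mapDomain (fun x : T => (x : PlVar n k))) = cont n k ℓ μ) :
    (monomial m (1 : K)) ∈ restrictIdeal (RingHom.ker (phiMF K n k ℓ)) T := by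
  classical
  rw [restrictIdeal, Ideal.mem_comap, rename_monomial]
  set mt := m.mapDomain (fun x : T => (x : PlVar n k)) with hmt
  have hsplit : (monomial mt (1:K)) =
      ((monomial mt (1:K)) - monomial μ 1) + monomial μ 1 := by ring
  rw [hsplit]
  apply Submodule.add_mem_sup
  · rw [RingHom.mem_ker]
    have : (phiMF K n k ℓ) ((monomial mt (1:K)) - monomial μ 1)
        = phiMF K n k ℓ (monomial mt (1:K)) - phiMF K n k ℓ (monomial μ 1) := map_sub _ _ _
    rw [this, phi_monomial, phi_monomial, hc, sub_self]
  · have hdecomp : Finsupp.single J 1 + (μ - Finsupp.single J 1) = μ := by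
      ext a
      by_cases ha : a = J
      · subst ha
        have : μ a ≠ 0 := Finsupp.mem_support_iff.mp hJ
        simp only [Finsupp.add_apply, Finsupp.tsub_apply, Finsupp.single_apply, if_pos rfl, if_true]
        omega
      · simp only [Finsupp.add_apply, Finsupp.tsub_apply, Finsupp.single_apply,
          if_neg (Ne.symm ha)]
        omega
    have hXJ : (X J : MvPolynomial (PlVar n k) K) ∈ Ideal.span (X '' {I | I ∉ T}) :=
      Ideal.subset_span ⟨J, hJT, rfl⟩
    have : (monomial μ (1:K)) = X J * monomial (μ - Finsupp.single J 1) 1 := by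
      rw [X, monomial_mul, one_mul, hdecomp]
    rw [this]
    exact Ideal.mul_mem_right _ _ hXJ

end Bridge
section Core

variable {n k ℓ : ℕ}

lemma eq_of_mfRow_one (hk : 2 ≤ k) {C : Fin k → ℕ} {i : Fin k} (h : mfRow ℓ C i = 1) :
    ((i : ℕ) = 0 ∧ nSmall ℓ C ≠ 1) ∨ ((i : ℕ) = 1 ∧ nSmall ℓ C = 1) := by
  by_cases h2 : 2 ≤ (i : ℕ)
  · rw [mfRow_ge2 C i h2] at h; omega
  · by_cases hs : nSmall ℓ C = 1
    · refine Or.inr ⟨?_, hs⟩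
      rcases (by omega : (i : ℕ) = 0 ∨ (i : ℕ) = 1) with h0 | h1
      · rw [mfRow_zero hk C h0, if_pos hs] at h; omega
      · exact h1
    · refine Or.inl ⟨?_, hs⟩
      rcases (by omega : (i : ℕ) = 0 ∨ (i : ℕ) = 1) with h0 | h1
      · exact h0
      · rw [mfRow_one hk C h1, if_neg hs] at h; omega

lemma eq_of_mfRow_two (hk : 2 ≤ k) {C : Fin k → ℕ} {i : Fin k} (h : mfRow ℓ C i = 2) :
    ((i : ℕ) = 0 ∧ nSmall ℓ C = 1) ∨ ((i : ℕ) = 1 ∧ nSmall ℓ C ≠ 1) := by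
  by_cases h2 : 2 ≤ (i : ℕ)
  · rw [mfRow_ge2 C i h2] at h; omega
  · by_cases hs : nSmall ℓ C = 1
    · refine Or.inl ⟨?_, hs⟩
      rcases (by omega : (i : ℕ) = 0 ∨ (i : ℕ) = 1) with h0 | h1
      · exact h0
      · rw [mfRow_one hk C h1, if_pos hs] at h; omega
    · refine Or.inr ⟨?_, hs⟩
      rcases (by omega : (i : ℕ) = 0 ∨ (i : ℕ) = 1) with h0 | h1
      · rw [mfRow_zero hk C h0, if_neg hs] at h; omega
      · exact h1

lemma row1_source (hk : 2 ≤ k) {ν : PlVar n k →₀ ℕ} {x : ℕ}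
    (hx : cont n k ℓ ν (1, x) ≠ 0) :
    ∃ C ∈ ν.support, ∃ i : Fin k,
      (((i : ℕ) = 0 ∧ nSmall ℓ C.val ≠ 1) ∨ ((i : ℕ) = 1 ∧ nSmall ℓ C.val = 1))
        ∧ C.val i = x := by
  obtain ⟨C, hC, i, hrow, hval⟩ := exists_of_cont_pos hx
  exact ⟨C, hC, i, eq_of_mfRow_one hk hrow, hval⟩

lemma row2_source (hk : 2 ≤ k) {ν : PlVar n k →₀ ℕ} {x : ℕ}
    (hx : cont n k ℓ ν (2, x) ≠ 0) :
    ∃ C ∈ ν.support, ∃ i : Fin k,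
      (((i : ℕ) = 0 ∧ nSmall ℓ C.val = 1) ∨ ((i : ℕ) = 1 ∧ nSmall ℓ C.val ≠ 1))
        ∧ C.val i = x := by
  obtain ⟨C, hC, i, hrow, hval⟩ := exists_of_cont_pos hx
  exact ⟨C, hC, i, eq_of_mfRow_two hk hrow, hval⟩

/-- Entries of columns in positions `≥ 2` are bounded. -/
lemma tail_le (hk : 2 ≤ k) {w : PlVar n k} {μ ν : PlVar n k →₀ ℕ}
    (hν : ∀ C ∈ ν.support, TupLe C.val w.val)
    (h : cont n k ℓ μ = cont n k ℓ ν) {J : PlVar n k} (hJ : J ∈ μ.support)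
    (s : Fin k) (hs : 2 ≤ (s : ℕ)) : J.val s ≤ w.val s := by
  have hrow := mfRow_ge2 (ℓ := ℓ) J.val s hs
  have hb : cont n k ℓ μ ((s : ℕ) + 1, J.val s) ≠ 0 := by
    have := cont_pos hJ (colExp_pos_of (ℓ := ℓ) J.val s)
    rwa [hrow] at this
  rw [h] at hb
  obtain ⟨C, hC, i, hrowi, hval⟩ := exists_of_cont_pos hb
  have his : i = s := by
    refine Fin.ext ?_
    by_cases h2 : 2 ≤ (i : ℕ)
    · rw [mfRow_ge2 C.val i h2] at hrowi; omega
    · exfalso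
      rcases (by omega : (i : ℕ) = 0 ∨ (i : ℕ) = 1) with h0 | h1
      · rw [mfRow_zero hk C.val h0] at hrowi; split_ifs at hrowi <;> omega
      · rw [mfRow_one hk C.val h1] at hrowi; split_ifs at hrowi <;> omega
  rw [his] at hval
  have := hν C hC s
  omega

/-- The second entry of any column of `μ` is bounded by `w₂`. -/
lemma snd_le (hk : 2 ≤ k) {w : PlVar n k} {μ ν : PlVar n k →₀ ℕ}
    (hν : ∀ C ∈ ν.support, TupLe C.val w.val)
    (h : cont n k ℓ μ = cont n k ℓ ν) {J : PlVar n k} (hJ : J ∈ μ.support)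
    {i0 i1 : Fin k} (hi0 : (i0 : ℕ) = 0) (hi1 : (i1 : ℕ) = 1) :
    J.val i1 ≤ w.val i1 := by
  have hw01 : w.val i0 ≤ w.val i1 := entry_le_of_le w.2.1 (by omega)
  by_cases hswap : nSmall ℓ J.val = 1
  · have hb : cont n k ℓ μ (1, J.val i1) ≠ 0 := by
      have hcol := colExp_pos_of (ℓ := ℓ) J.val i1
      rw [mfRow_one hk J.val hi1, if_pos hswap] at hcol
      exact cont_pos hJ hcol
    rw [h] at hb
    obtain ⟨C, hC, i, hcase, hval⟩ := row1_source hk hb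
    rcases hcase with ⟨hiv, _⟩ | ⟨hiv, _⟩
    · have hle := hν C hC i
      have : i = i0 := Fin.ext (by omega)
      rw [this] at hle hval; omega
    · have hle := hν C hC i
      have : i = i1 := Fin.ext (by omega)
      rw [this] at hle hval; omega
  · have hb : cont n k ℓ μ (2, J.val i1) ≠ 0 := by
      have hcol := colExp_pos_of (ℓ := ℓ) J.val i1
      rw [mfRow_one hk J.val hi1, if_neg hswap] at hcol
      exact cont_pos hJ hcol
    rw [h] at hb
    obtain ⟨C, hC, i, hcase, hval⟩ := row2_source hk hb
    rcases hcase with ⟨hiv, _⟩ | ⟨hiv, _⟩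
    · have hle := hν C hC i
      have : i = i0 := Fin.ext (by omega)
      rw [this] at hle hval; omega
    · have hle := hν C hC i
      have : i = i1 := Fin.ext (by omega)
      rw [this] at hle hval; omega

/-- The first entry of any column of `μ` is bounded by `w₁`, under the three
"local" conditions. -/
lemma fst_le (hk : 2 ≤ k) {w : PlVar n k} {μ ν : PlVar n k →₀ ℕ}
    (hν : ∀ C ∈ ν.support, TupLe C.val w.val)
    (h : cont n k ℓ μ = cont n k ℓ ν) {J : PlVar n k} (hJ : J ∈ μ.support)
    {i0 i1 : Fin k} (hi0 : (i0 : ℕ) = 0) (hi1 : (i1 : ℕ) = 1)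
    (hc : w.val i0 = ℓ ∨ w.val i1 ≤ ℓ ∨ w.val i1 = w.val i0 + 1) :
    J.val i0 ≤ w.val i0 := by
  have hw01 : w.val i0 ≤ w.val i1 := entry_le_of_le w.2.1 (by omega)
  have hab : J.val i0 < J.val i1 := J.2.1 (by rw [Fin.lt_def]; omega)
  have hsnd : J.val i1 ≤ w.val i1 := snd_le hk hν h hJ hi0 hi1
  by_cases hswap : nSmall ℓ J.val = 1
  · -- J = (a, b, …) with a ≤ ℓ < b; a sits in row 2
    obtain ⟨ha, hbgt⟩ := (nSmall_one_iff J.2.1 hi0 hi1).mp hswap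
    have ha2 : cont n k ℓ μ (2, J.val i0) ≠ 0 := by
      have hcol := colExp_pos_of (ℓ := ℓ) J.val i0
      rw [mfRow_zero hk J.val hi0, if_pos hswap] at hcol
      exact cont_pos hJ hcol
    rw [h] at ha2
    obtain ⟨C, hC, i, hcase, hval⟩ := row2_source hk ha2
    rcases hcase with ⟨hiv, _⟩ | ⟨hiv, hCns⟩
    · have hle := hν C hC i
      have : i = i0 := Fin.ext (by omega)
      rw [this] at hle hval; omega
    · -- a = C i1 with C not swapped
      have hle := hν C hC i
      have hii : i = i1 := Fin.ext (by omega)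
      rw [hii] at hle hval
      rcases hc with hc | hc | hc
      · omega
      · omega
      · -- w₂ = w₁ + 1
        by_contra hna
        have haeq : J.val i0 = w.val i0 + 1 := by omega
        -- now find the source of b in row 1
        have hb1 : cont n k ℓ μ (1, J.val i1) ≠ 0 := by
          have hcol := colExp_pos_of (ℓ := ℓ) J.val i1
          rw [mfRow_one hk J.val hi1, if_pos hswap] at hcol
          exact cont_pos hJ hcol
        rw [h] at hb1
        obtain ⟨C', hC', i', hcase', hval'⟩ := row1_source hk hb1
        rcases hcase' with ⟨hiv', _⟩ | ⟨hiv', _⟩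
        · have hle' := hν C' hC' i'
          have : i' = i0 := Fin.ext (by omega)
          rw [this] at hle' hval'; omega
        · have hle' := hν C' hC' i'
          have : i' = i1 := Fin.ext (by omega)
          rw [this] at hle' hval'; omega
  · -- J not swapped: a sits in row 1
    have ha1 : cont n k ℓ μ (1, J.val i0) ≠ 0 := by
      have hcol := colExp_pos_of (ℓ := ℓ) J.val i0
      rw [mfRow_zero hk J.val hi0, if_neg hswap] at hcol
      exact cont_pos hJ hcol
    rw [h] at ha1
    obtain ⟨C, hC, i, hcase, hval⟩ := row1_source hk ha1
    rcases hcase with ⟨hiv, _⟩ | ⟨hiv, hCs⟩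
    · have hle := hν C hC i
      have : i = i0 := Fin.ext (by omega)
      rw [this] at hle hval; omega
    · -- a = C i1 with C swapped, hence ℓ < a
      have hii : i = i1 := Fin.ext (by omega)
      have hle := hν C hC i
      rw [hii] at hle hval
      have hagt : ℓ < J.val i0 := by
        have := (nSmall_one_iff C.2.1 hi0 hi1).mp hCs
        omega
      rcases hc with hc | hc | hc
      · -- w₁ = ℓ : contradiction via the source of b in row 2
        exfalso
        have hb2 : cont n k ℓ μ (2, J.val i1) ≠ 0 := by
          have hcol := colExp_pos_of (ℓ := ℓ) J.val i1
          rw [mfRow_one hk J.val hi1, if_neg hswap] at hcol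
          exact cont_pos hJ hcol
        rw [h] at hb2
        obtain ⟨C', hC', i', hcase', hval'⟩ := row2_source hk hb2
        have hbgt : ℓ < J.val i1 := by omega
        rcases hcase' with ⟨hiv', hCs'⟩ | ⟨hiv', hCns'⟩
        · -- swapped C' : its first entry is ≤ ℓ, but equal to b > ℓ
          have hii' : i' = i0 := Fin.ext (by omega)
          have := (nSmall_one_iff C'.2.1 hi0 hi1).mp hCs'
          rw [hii'] at hval'
          omega
        · -- unswapped C' with second entry > ℓ : its first entry is > ℓ but ≤ w₁ = ℓ
          have hii' : i' = i1 := Fin.ext (by omega)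
          rw [hii'] at hval'
          have hfst : ℓ < C'.val i0 := by
            by_contra hcon
            push_neg at hcon
            exact hCns' (nSmall_eq_one C'.2.1 hi0 hi1 hcon (by omega))
          have hle' := hν C' hC' i0
          omega
      · omega
      · -- w₂ = w₁ + 1
        by_contra hna
        omega

/-- The `w₁ = 1` case : every column of `μ` starts with `1`. -/
lemma fst_eq_one (hk : 2 ≤ k) {w : PlVar n k} {μ ν : PlVar n k →₀ ℕ}
    (hν : ∀ C ∈ ν.support, TupLe C.val w.val)
    (h : cont n k ℓ μ = cont n k ℓ ν) {J : PlVar n k} (hJ : J ∈ μ.support)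
    {i0 : Fin k} (hi0 : (i0 : ℕ) = 0) (hw1 : w.val ⟨0, Nat.zero_lt_of_lt hk⟩ = 1) :
    J.val i0 = 1 := by
  classical
  have hw1' : w.val i0 = 1 := by
    rw [show i0 = (⟨0, by omega⟩ : Fin k) from Fin.ext hi0]
    exact hw1
  have hdeg : (μ.sum fun _ e => e) = ν.sum fun _ e => e := by
    have hm := congrArg massH h
    rw [massH_cont, massH_cont] at hm
    exact Nat.eq_of_mul_eq_mul_left (by omega) hm
  have hones : cont n k ℓ μ (1, 1) + cont n k ℓ μ (2, 1)
      = cont n k ℓ ν (1, 1) + cont n k ℓ ν (2, 1) := by rw [h]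
  rw [cont_ones hk μ hi0, cont_ones hk ν hi0] at hones
  have hνones : ∑ C ∈ ν.support, ν C * (if C.val i0 = 1 then 1 else 0)
      = ν.sum fun _ e => e := by
    rw [Finsupp.sum]
    refine Finset.sum_congr rfl fun C hC => ?_
    have h1 := hν C hC i0
    have h2 := (C.2.2 i0).1
    rw [if_pos (by omega), Nat.mul_one]
  rw [hνones, ← hdeg, Finsupp.sum] at hones
  by_contra hne
  have hlt : ∑ C ∈ μ.support, μ C * (if C.val i0 = 1 then 1 else 0)
      < ∑ C ∈ μ.support, μ C := by
    refine Finset.sum_lt_sum (fun C _ => ?_) ⟨J, hJ, ?_⟩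
    · by_cases hC1 : C.val i0 = 1 <;> simp [hC1]
    · rw [if_neg hne, Nat.mul_zero]
      exact Nat.pos_of_ne_zero (Finsupp.mem_support_iff.mp hJ)
  omega

/-- The `w₁ = n - k + 1` case : `w` is maximal. -/
lemma all_le_of_max (hk : 2 ≤ k) (hkn : k < n) {w : PlVar n k}
    (hw : w.val ⟨0, Nat.zero_lt_of_lt hk⟩ = n - k + 1) (J : PlVar n k) : TupLe J.val w.val := by
  intro s
  have h1 := idx_le_bound J.2 (by omega) s
  set z : Fin k := ⟨0, by omega⟩ with hz
  have h2 := strictMono_add_le w.2.1 (s : ℕ) z s (by simp [hz])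
  have h3 : w.val z = n - k + 1 := hw
  omega

/-- Core combinatorial lemma : if the condition on `w` holds and `cont μ = cont ν` with all
columns of `ν` below `w`, then all columns of `μ` are below `w`. -/
lemma core (hk : 2 ≤ k) (hkn : k < n) (hℓ1 : 1 ≤ ℓ) {w : PlVar n k}
    (hcond : w.val ⟨0, Nat.zero_lt_of_lt hk⟩ = 1 ∨ w.val ⟨0, Nat.zero_lt_of_lt hk⟩ = ℓ ∨
        w.val ⟨0, Nat.zero_lt_of_lt hk⟩ = n - k + 1 ∨
        w.val ⟨1, hk⟩ ≤ ℓ ∨ w.val ⟨1, hk⟩ = w.val ⟨0, Nat.zero_lt_of_lt hk⟩ + 1)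
    {μ ν : PlVar n k →₀ ℕ} (hν : ∀ C ∈ ν.support, TupLe C.val w.val)
    (h : cont n k ℓ μ = cont n k ℓ ν) :
    ∀ J ∈ μ.support, TupLe J.val w.val := by
  have hcond' : w.val ⟨0, by omega⟩ = 1 ∨ w.val ⟨0, by omega⟩ = n - k + 1 ∨
      (w.val (⟨0, by omega⟩ : Fin k) = ℓ ∨ w.val (⟨1, by omega⟩ : Fin k) ≤ ℓ ∨
        w.val (⟨1, by omega⟩ : Fin k) = w.val (⟨0, by omega⟩ : Fin k) + 1) := by
    tauto
  intro J hJ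
  rcases hcond' with hc | hc | hc
  · -- w₁ = 1
    intro s
    rcases (by omega : (s : ℕ) = 0 ∨ (s : ℕ) = 1 ∨ 2 ≤ (s : ℕ)) with hs | hs | hs
    · have h1 : J.val s = 1 := fst_eq_one hk hν h hJ hs hc
      have h2 := (w.2.2 s).1
      omega
    · have hss : s = (⟨1, by omega⟩ : Fin k) := Fin.ext hs
      rw [hss]
      exact snd_le hk hν h hJ (i0 := ⟨0, by omega⟩) rfl rfl
    · exact tail_le hk hν h hJ s hs
  · exact all_le_of_max hk hkn hc J
  · intro s
    rcases (by omega : (s : ℕ) = 0 ∨ (s : ℕ) = 1 ∨ 2 ≤ (s : ℕ)) with hs | hs | hs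
    · have hss : s = (⟨0, by omega⟩ : Fin k) := Fin.ext hs
      rw [hss]
      exact fst_le hk hν h hJ (i0 := ⟨0, by omega⟩) rfl (i1 := ⟨1, by omega⟩) rfl hc
    · have hss : s = (⟨1, by omega⟩ : Fin k) := Fin.ext hs
      rw [hss]
      exact snd_le hk hν h hJ (i0 := ⟨0, by omega⟩) rfl rfl
    · exact tail_le hk hν h hJ s hs

end Core
section Constr

variable {n k ℓ : ℕ}

/-- A column `(x, y, w₃, …, w_k)`. -/
def colF (w : PlVar n k) (x y : ℕ) : Fin k → ℕ := fun s =>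
  if (s : ℕ) = 0 then x else if (s : ℕ) = 1 then y else w.val s

lemma colF_isIdx (hk : 2 ≤ k) {w : PlVar n k} {x y : ℕ} {i1 : Fin k} (hi1 : (i1 : ℕ) = 1)
    (hx1 : 1 ≤ x) (hxy : x < y) (hyw1 : y ≤ w.val i1) : IsIdx n k (colF w x y) := by
  have hwy : ∀ t : Fin k, 2 ≤ (t : ℕ) → y < w.val t := by
    intro t ht
    have := strictMono_add_le w.2.1 ((t : ℕ) - 1) i1 t (by omega)
    omega
  constructor
  · intro s t hst
    rw [Fin.lt_def] at hst
    rcases (by omega : (t : ℕ) = 1 ∧ (s : ℕ) = 0 ∨ (2 ≤ (t : ℕ) ∧ (s : ℕ) = 0) ∨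
        (2 ≤ (t : ℕ) ∧ (s : ℕ) = 1) ∨ (2 ≤ (t : ℕ) ∧ 2 ≤ (s : ℕ))) with
      ⟨ht, hs⟩ | ⟨ht, hs⟩ | ⟨ht, hs⟩ | ⟨ht, hs⟩
    · simp only [colF]
      rw [if_pos hs, if_neg (by omega), if_pos ht]
      exact hxy
    · have := hwy t ht
      simp only [colF]
      rw [if_pos hs, if_neg (by omega), if_neg (by omega)]
      omega
    · have := hwy t ht
      simp only [colF]
      rw [if_neg (by omega), if_pos hs, if_neg (by omega), if_neg (by omega)]
      omega
    · have := w.2.1 (show s < t from by rwa [Fin.lt_def])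
      simp only [colF]
      rw [if_neg (by omega), if_neg (by omega), if_neg (by omega), if_neg (by omega)]
      exact this
  · intro s
    have h1 := (w.2.2 s).1
    have h2 := (w.2.2 s).2
    have h3 := (w.2.2 i1).2
    simp only [colF]
    split_ifs <;> omega

lemma colF_le {w : PlVar n k} {x y : ℕ} {i0 i1 : Fin k} (hi0 : (i0 : ℕ) = 0)
    (hi1 : (i1 : ℕ) = 1) (hx : x ≤ w.val i0) (hy : y ≤ w.val i1) :
    TupLe (colF w x y) w.val := by
  intro s
  simp only [colF]
  split_ifs with h0 h1
  · have : s = i0 := Fin.ext (by omega)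
    rw [this]; exact hx
  · have : s = i1 := Fin.ext (by omega)
    rw [this]; exact hy
  · exact le_refl _

lemma colF_apply0 {w : PlVar n k} {x y : ℕ} {i0 : Fin k} (hi0 : (i0 : ℕ) = 0) :
    colF w x y i0 = x := by simp [colF, hi0]

lemma colF_apply1 {w : PlVar n k} {x y : ℕ} {i1 : Fin k} (hi1 : (i1 : ℕ) = 1) :
    colF w x y i1 = y := by simp [colF, hi1]

lemma colF_ne {w : PlVar n k} {x y x' y' : ℕ} {i0 : Fin k} (hi0 : (i0 : ℕ) = 0)
    (hxx : x ≠ x') : colF w x y ≠ colF w x' y' := by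
  intro h
  have := congrFun h i0
  rw [colF_apply0 hi0, colF_apply0 hi0] at this
  exact hxx this

/-- The part of `colExp` coming from positions `≥ 2`. -/
noncomputable def tailT (w : PlVar n k) : (ℕ × ℕ) →₀ ℕ :=
  ∑ i ∈ Finset.univ.filter (fun i : Fin k => 2 ≤ (i : ℕ)),
    Finsupp.single ((i : ℕ) + 1, w.val i) 1

lemma colExp_colF (hk : 2 ≤ k) {w : PlVar n k} (x y : ℕ) {i0 i1 : Fin k}
    (hi0 : (i0 : ℕ) = 0) (hi1 : (i1 : ℕ) = 1) :
    colExp ℓ (colF w x y) =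
      (if nSmall ℓ (colF w x y) = 1 then
          Finsupp.single (2, x) 1 + Finsupp.single (1, y) 1
        else Finsupp.single (1, x) 1 + Finsupp.single (2, y) 1) + tailT w := by
  rw [colExp_split hk _ hi0 hi1, mfRow_zero hk _ hi0, mfRow_one hk _ hi1,
    colF_apply0 hi0, colF_apply1 hi1]
  have htail : (∑ i ∈ Finset.univ.filter (fun i : Fin k => 2 ≤ (i : ℕ)),
      Finsupp.single ((i : ℕ) + 1, colF w x y i) 1) = tailT w := by
    refine Finset.sum_congr rfl fun i hi => ?_
    have h2 := (Finset.mem_filter.mp hi).2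
    simp only [colF]
    rw [if_neg (by omega), if_neg (by omega)]
  rw [htail]
  by_cases hs : nSmall ℓ (colF w x y) = 1 <;> simp [hs]

end Constr
section Main

variable {n k ℓ : ℕ}

def mkPl (n k : ℕ) (v : Fin k → ℕ) (h : IsIdx n k v) : PlVar n k := ⟨v, h⟩

@[simp] lemma mkPl_val (v : Fin k → ℕ) (h : IsIdx n k v) : (mkPl n k v h).val = v := rfl

lemma cont_single_mk (v : Fin k → ℕ) (h : IsIdx n k v) :
    cont n k ℓ (Finsupp.single (mkPl n k v h) 1) = colExp ℓ v := by
  rw [cont_single, one_smul, mkPl_val]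

lemma mapDomain_single_mk {T : Set (PlVar n k)} (J : PlVar n k) (h : J ∈ T) :
    Finsupp.mapDomain (fun x : T => (x : PlVar n k)) (Finsupp.single (⟨J, h⟩ : T) 1)
      = Finsupp.single J 1 := Finsupp.mapDomain_single

lemma mkPl_ne {w : PlVar n k} {x y x' y' : ℕ} {h h'} {i0 : Fin k} (hi0 : (i0 : ℕ) = 0)
    (hxx : x ≠ x') : mkPl n k (colF w x y) h ≠ mkPl n k (colF w x' y') h' := by
  intro hcon
  exact colF_ne hi0 hxx (congrArg Subtype.val hcon)

lemma not_mf (K : Type*) [Field K] (hk : 2 ≤ k) (hkn : k < n) (hℓ1 : 1 ≤ ℓ)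
    {w : PlVar n k} {i0 i1 : Fin k} (hi0 : (i0 : ℕ) = 0) (hi1 : (i1 : ℕ) = 1)
    (h2 : w.val i0 ≠ ℓ) (h4 : ℓ < w.val i1) (h5 : w.val i1 ≠ w.val i0 + 1)
    (hw0pos : 2 ≤ w.val i0) :
    ¬ MonomialFree (restrictIdeal (RingHom.ker (phiMF K n k ℓ)) (TleW w)) := by
  classical
  have hw01 : w.val i0 < w.val i1 := w.2.1 (by rw [Fin.lt_def]; omega)
  have hw1b : w.val i0 + 2 ≤ w.val i1 := by omega
  rcases lt_or_gt_of_ne h2 with hcase | hcase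
  · -- w₁ < ℓ : degree-3 relation
    set a := w.val i0 with ha
    have hC : IsIdx n k (colF w a (a + 1)) := colF_isIdx hk hi1 (by omega) (by omega) (by omega)
    have hD : IsIdx n k (colF w a (ℓ + 1)) := colF_isIdx hk hi1 (by omega) (by omega) (by omega)
    have hF : IsIdx n k (colF w (a - 1) (a + 1)) :=
      colF_isIdx hk hi1 (by omega) (by omega) (by omega)
    have hG1 : IsIdx n k (colF w (a + 1) (ℓ + 1)) :=
      colF_isIdx hk hi1 (by omega) (by omega) (by omega)
    have hG3 : IsIdx n k (colF w (a - 1) a) :=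
      colF_isIdx hk hi1 (by omega) (by omega) (by omega)
    have hCs : nSmall ℓ (colF w a (a + 1)) ≠ 1 := by
      have := two_le_nSmall (ℓ := ℓ) hC.1 hi0 hi1 (by rw [colF_apply1 hi1]; omega)
      omega
    have hDs : nSmall ℓ (colF w a (ℓ + 1)) = 1 :=
      nSmall_eq_one hD.1 hi0 hi1 (by rw [colF_apply0 hi0]; omega)
        (by rw [colF_apply1 hi1]; omega)
    have hFs : nSmall ℓ (colF w (a - 1) (a + 1)) ≠ 1 := by
      have := two_le_nSmall (ℓ := ℓ) hF.1 hi0 hi1 (by rw [colF_apply1 hi1]; omega)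
      omega
    have hG1s : nSmall ℓ (colF w (a + 1) (ℓ + 1)) = 1 :=
      nSmall_eq_one hG1.1 hi0 hi1 (by rw [colF_apply0 hi0]; omega)
        (by rw [colF_apply1 hi1]; omega)
    have hG3s : nSmall ℓ (colF w (a - 1) a) ≠ 1 := by
      have := two_le_nSmall (ℓ := ℓ) hG3.1 hi0 hi1 (by rw [colF_apply1 hi1]; omega)
      omega
    have hCexp : colExp ℓ (colF w a (a + 1))
        = Finsupp.single (1, a) 1 + Finsupp.single (2, a + 1) 1 + tailT w := by
      rw [colExp_colF hk _ _ hi0 hi1, if_neg hCs]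
    have hDexp : colExp ℓ (colF w a (ℓ + 1))
        = Finsupp.single (2, a) 1 + Finsupp.single (1, ℓ + 1) 1 + tailT w := by
      rw [colExp_colF hk _ _ hi0 hi1, if_pos hDs]
    have hFexp : colExp ℓ (colF w (a - 1) (a + 1))
        = Finsupp.single (1, a - 1) 1 + Finsupp.single (2, a + 1) 1 + tailT w := by
      rw [colExp_colF hk _ _ hi0 hi1, if_neg hFs]
    have hG1exp : colExp ℓ (colF w (a + 1) (ℓ + 1))
        = Finsupp.single (2, a + 1) 1 + Finsupp.single (1, ℓ + 1) 1 + tailT w := by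
      rw [colExp_colF hk _ _ hi0 hi1, if_pos hG1s]
    have hG3exp : colExp ℓ (colF w (a - 1) a)
        = Finsupp.single (1, a - 1) 1 + Finsupp.single (2, a) 1 + tailT w := by
      rw [colExp_colF hk _ _ hi0 hi1, if_neg hG3s]
    have hCmem : mkPl n k (colF w a (a + 1)) hC ∈ TleW w :=
      colF_le hi0 hi1 (le_refl _) (by omega)
    have hDmem : mkPl n k (colF w a (ℓ + 1)) hD ∈ TleW w :=
      colF_le hi0 hi1 (le_refl _) (by omega)
    have hFmem : mkPl n k (colF w (a - 1) (a + 1)) hF ∈ TleW w :=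
      colF_le hi0 hi1 (by omega) (by omega)
    have hG1T : mkPl n k (colF w (a + 1) (ℓ + 1)) hG1 ∉ TleW w := by
      intro hT
      have := hT i0
      rw [mkPl_val, colF_apply0 hi0] at this
      omega
    set μ : PlVar n k →₀ ℕ := Finsupp.single (mkPl n k (colF w (a + 1) (ℓ + 1)) hG1) 1
      + (Finsupp.single (mkPl n k (colF w a (a + 1)) hC) 1
        + Finsupp.single (mkPl n k (colF w (a - 1) a) hG3) 1) with hμ
    have hG1supp : mkPl n k (colF w (a + 1) (ℓ + 1)) hG1 ∈ μ.support := by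
      rw [Finsupp.mem_support_iff, hμ]
      have hne1 := mkPl_ne (h := hC) (h' := hG1) hi0 (show a ≠ a + 1 by omega)
      have hne2 := mkPl_ne (h := hG3) (h' := hG1) hi0 (show a - 1 ≠ a + 1 by omega)
      simp [Finsupp.single_apply, hne1, hne2]
    set m : (TleW w : Set (PlVar n k)) →₀ ℕ :=
      Finsupp.single (⟨_, hCmem⟩ : TleW w) 1
        + (Finsupp.single (⟨_, hDmem⟩ : TleW w) 1 + Finsupp.single (⟨_, hFmem⟩ : TleW w) 1)
      with hm
    have hc : cont n k ℓ (m.mapDomain (fun x : TleW w => (x : PlVar n k))) = cont n k ℓ μ := by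
      rw [hm, hμ, Finsupp.mapDomain_add, Finsupp.mapDomain_add, mapDomain_single_mk,
        mapDomain_single_mk, mapDomain_single_mk]
      simp only [cont_add, cont_single_mk]
      rw [hCexp, hDexp, hFexp, hG1exp, hG3exp]
      abel
    intro hMF
    exact hMF m (bridge_backward m μ _ hG1supp hG1T hc)
  · -- ℓ < w₁ : degree-2 relation
    set a := w.val i0 with ha
    have hD : IsIdx n k (colF w ℓ (a + 1)) := colF_isIdx hk hi1 (by omega) (by omega) (by omega)
    have hE : IsIdx n k (colF w a (a + 2)) := colF_isIdx hk hi1 (by omega) (by omega) (by omega)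
    have hG1 : IsIdx n k (colF w (a + 1) (a + 2)) :=
      colF_isIdx hk hi1 (by omega) (by omega) (by omega)
    have hG2 : IsIdx n k (colF w ℓ a) := colF_isIdx hk hi1 (by omega) (by omega) (by omega)
    have hDs : nSmall ℓ (colF w ℓ (a + 1)) = 1 :=
      nSmall_eq_one hD.1 hi0 hi1 (by rw [colF_apply0 hi0]) (by rw [colF_apply1 hi1]; omega)
    have hEs : nSmall ℓ (colF w a (a + 2)) ≠ 1 := by
      rw [nSmall_eq_zero hE.1 hi0 (by rw [colF_apply0 hi0]; omega)]
      omega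
    have hG1s : nSmall ℓ (colF w (a + 1) (a + 2)) ≠ 1 := by
      rw [nSmall_eq_zero hG1.1 hi0 (by rw [colF_apply0 hi0]; omega)]
      omega
    have hG2s : nSmall ℓ (colF w ℓ a) = 1 :=
      nSmall_eq_one hG2.1 hi0 hi1 (by rw [colF_apply0 hi0]) (by rw [colF_apply1 hi1]; omega)
    have hDexp : colExp ℓ (colF w ℓ (a + 1))
        = Finsupp.single (2, ℓ) 1 + Finsupp.single (1, a + 1) 1 + tailT w := by
      rw [colExp_colF hk _ _ hi0 hi1, if_pos hDs]
    have hEexp : colExp ℓ (colF w a (a + 2))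
        = Finsupp.single (1, a) 1 + Finsupp.single (2, a + 2) 1 + tailT w := by
      rw [colExp_colF hk _ _ hi0 hi1, if_neg hEs]
    have hG1exp : colExp ℓ (colF w (a + 1) (a + 2))
        = Finsupp.single (1, a + 1) 1 + Finsupp.single (2, a + 2) 1 + tailT w := by
      rw [colExp_colF hk _ _ hi0 hi1, if_neg hG1s]
    have hG2exp : colExp ℓ (colF w ℓ a)
        = Finsupp.single (2, ℓ) 1 + Finsupp.single (1, a) 1 + tailT w := by
      rw [colExp_colF hk _ _ hi0 hi1, if_pos hG2s]
    have hDmem : mkPl n k (colF w ℓ (a + 1)) hD ∈ TleW w :=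
      colF_le hi0 hi1 (by omega) (by omega)
    have hEmem : mkPl n k (colF w a (a + 2)) hE ∈ TleW w :=
      colF_le hi0 hi1 (le_refl _) (by omega)
    have hG1T : mkPl n k (colF w (a + 1) (a + 2)) hG1 ∉ TleW w := by
      intro hT
      have := hT i0
      rw [mkPl_val, colF_apply0 hi0] at this
      omega
    set μ : PlVar n k →₀ ℕ := Finsupp.single (mkPl n k (colF w (a + 1) (a + 2)) hG1) 1
      + Finsupp.single (mkPl n k (colF w ℓ a) hG2) 1 with hμ
    have hG1supp : mkPl n k (colF w (a + 1) (a + 2)) hG1 ∈ μ.support := by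
      rw [Finsupp.mem_support_iff, hμ]
      have hne1 := mkPl_ne (h := hG2) (h' := hG1) hi0 (show ℓ ≠ a + 1 by omega)
      simp [Finsupp.single_apply, hne1]
    set m : (TleW w : Set (PlVar n k)) →₀ ℕ :=
      Finsupp.single (⟨_, hDmem⟩ : TleW w) 1 + Finsupp.single (⟨_, hEmem⟩ : TleW w) 1 with hm
    have hc : cont n k ℓ (m.mapDomain (fun x : TleW w => (x : PlVar n k))) = cont n k ℓ μ := by
      rw [hm, hμ, Finsupp.mapDomain_add, mapDomain_single_mk, mapDomain_single_mk]
      simp only [cont_add, cont_single_mk]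
      rw [hDexp, hEexp, hG1exp, hG2exp]
      abel
    intro hMF
    exact hMF m (bridge_backward m μ _ hG1supp hG1T hc)

end Main
/-- For `ℓ ∈ {1, …, n-k+1}` the restricted ideal
`G_{k,n,ℓ}|_w = ker(φ_ℓ)|_{{I : I ≤ w}}` is monomial-free if and only if
`w_1 ∈ {1, ℓ, n-k+1}` or `w_2 ∈ {1, …, ℓ} ∪ {w_1 + 1}`. -/
theorem statement_5 (K : Type*) [Field K] (n k ℓ : ℕ) (hk : 2 ≤ k) (hkn : k < n)
    (hℓ1 : 1 ≤ ℓ) (hℓ2 : ℓ ≤ n - k + 1) (w : PlVar n k) :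
    MonomialFree (restrictIdeal (RingHom.ker (phiMF K n k ℓ)) (TleW w)) ↔
      (w.val ⟨0, by omega⟩ = 1 ∨ w.val ⟨0, by omega⟩ = ℓ ∨
        w.val ⟨0, by omega⟩ = n - k + 1 ∨
        w.val ⟨1, by omega⟩ ≤ ℓ ∨ w.val ⟨1, by omega⟩ = w.val ⟨0, by omega⟩ + 1) := by
  constructor
  · -- monomial-free → condition (contrapositive)
    intro hMF
    by_contra hcon
    push_neg at hcon
    have h0k : 0 < k := by omega
    have h1k : 1 < k := by omega
    have hc1 : w.val ⟨0, h0k⟩ ≠ 1 := hcon.1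
    have hc2 : w.val ⟨0, h0k⟩ ≠ ℓ := hcon.2.1
    have hc4 : ℓ < w.val ⟨1, h1k⟩ := hcon.2.2.2.1
    have hc5 : w.val ⟨1, h1k⟩ ≠ w.val ⟨0, h0k⟩ + 1 := hcon.2.2.2.2
    have hp : 1 ≤ w.val ⟨0, h0k⟩ := (w.2.2 ⟨0, h0k⟩).1
    exact not_mf K hk hkn hℓ1 (i0 := ⟨0, h0k⟩) rfl (i1 := ⟨1, h1k⟩) rfl hc2 hc4 hc5
      (by omega) hMF
  · -- condition → monomial-free
    intro hcond m hm
    classical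
    obtain ⟨μ, ⟨Jw, hJs, hJT⟩, hcc⟩ := bridge_forward hm
    refine hJT ?_
    have hν : ∀ C ∈ (Finsupp.mapDomain (fun x : TleW w => (x : PlVar n k)) m).support,
        TupLe C.val w.val := by
      intro C hC
      rcases Finset.mem_image.mp (Finsupp.mapDomain_support hC) with ⟨x, _, rfl⟩
      exact x.2
    exact core hk hkn hℓ1 hcond hν hcc Jw hJs
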